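/- A function z : [0,τ) → ℝ solves z^{(d+1)} = z·z^{(d)} with z^{(i)}(0)=0 for i < d and z^{(d)}(0)=1 if and only if its antiderivative x(t) = ∫₀ᵗ z(s)ds solves x^{(d+1)}(t) = exp(x(t)) with x^{(i)}(0) = 0 for all 0 ≤ i ≤ d. -/

import Mathlib

open Set Filter

/-- z solves z^{(d+1)} = z·z^{(d)} with z^{(i)}(0)=0 (i<d),
z^{(d)}(0)=1 on [0,τ) iff its antiderivative x(t) = ∫₀ᵗ z solves
x^{(d+1)} = exp(x) with x^{(i)}(0) = 0 for all 0 ≤ i ≤ d. -/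
theorem stmt_4 (d : ℕ) (hd : 1 ≤ d) (τ : ℝ) (hτ : 0 < τ)
    (z x : ℝ → ℝ) (hz : ContDiff ℝ (d + 1) z)
    (hx : ∀ t, x t = ∫ s in (0 : ℝ)..t, z s) :
    ((∀ t ∈ Ico (0 : ℝ) τ,
        iteratedDeriv (d + 1) z t = z t * iteratedDeriv d z t) ∧
      (∀ i < d, iteratedDeriv i z 0 = 0) ∧ iteratedDeriv d z 0 = 1) ↔
    ((∀ t ∈ Ico (0 : ℝ) τ, iteratedDeriv (d + 1) x t = Real.exp (x t)) ∧
      ∀ i ≤ d, iteratedDeriv i x 0 = 0) := by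
  have hzc : Continuous z := hz.continuous
  have hxz : ∀ t, HasDerivAt x (z t) t := by
    intro t
    have := (hzc.integral_hasStrictDerivAt 0 t).hasDerivAt
    have hxe : x = fun u => ∫ s in (0:ℝ)..u, z s := funext hx
    rw [hxe]
    exact this
  have hderivx : deriv x = z := funext fun t => (hxz t).deriv
  have hxdiff : Differentiable ℝ x := fun t => (hxz t).differentiableAt
  have iterx : ∀ n : ℕ, iteratedDeriv (n + 1) x = iteratedDeriv n z := by
    intro n; rw [iteratedDeriv_succ', hderivx]
  have hx0 : x 0 = 0 := by rw [hx]; simp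
  -- derivative of iteratedDeriv d z is iteratedDeriv (d+1) z
  have hdz : ∀ t, HasDerivAt (iteratedDeriv d z) (iteratedDeriv (d + 1) z t) t := by
    intro t
    have h1 : DifferentiableAt ℝ (iteratedDeriv d z) t :=
      (hz.differentiable_iteratedDeriv d (by exact_mod_cast Nat.lt_succ_self d)).differentiableAt
    have := h1.hasDerivAt
    rwa [show deriv (iteratedDeriv d z) t = iteratedDeriv (d + 1) z t by
      rw [iteratedDeriv_succ]] at this
  have hexpx : ∀ t, HasDerivAt (fun s => Real.exp (x s)) (Real.exp (x t) * z t) t := by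
    intro t
    exact (Real.hasDerivAt_exp (x t)).comp t (hxz t)
  constructor
  · rintro ⟨hode, hinit, hdinit⟩
    -- show iteratedDeriv d z t = exp (x t) on Ico via g = iD d z * exp (-x)
    set g : ℝ → ℝ := fun t => iteratedDeriv d z t * Real.exp (-x t) with hg
    have hgderiv : ∀ t ∈ Ico (0:ℝ) τ, HasDerivAt g 0 t := by
      intro t ht
      have h1 : HasDerivAt (fun s => Real.exp (-x s)) (Real.exp (-x t) * (-z t)) t := by
        have := (Real.hasDerivAt_exp (-x t)).comp t ((hxz t).neg)
        exact this
      have h2 := (hdz t).mul h1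
      have : iteratedDeriv (d + 1) z t * Real.exp (-x t) +
          iteratedDeriv d z t * (Real.exp (-x t) * -z t) = 0 := by
        rw [hode t ht]; ring
      rwa [this] at h2
    have hgconst : ∀ t ∈ Ico (0:ℝ) τ, g t = g 0 := by
      intro t ht
      have hcont : ContinuousOn g (Icc 0 t) := by
        apply Continuous.continuousOn
        exact ((hz.continuous_iteratedDeriv d (by exact_mod_cast Nat.le_succ d)).mul
          (Real.continuous_exp.comp hxdiff.continuous.neg))
      have := constant_of_has_deriv_right_zero hcont (fun s hs => by
        have hsIco : s ∈ Ico (0:ℝ) τ := ⟨hs.1, lt_of_lt_of_le hs.2 (le_of_lt ht.2)⟩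
        exact (hgderiv s hsIco).hasDerivWithinAt)
      exact this t ⟨ht.1, le_refl t⟩
    have hg0 : g 0 = 1 := by simp [hg, hdinit, hx0]
    have hkey : ∀ t ∈ Ico (0:ℝ) τ, iteratedDeriv d z t = Real.exp (x t) := by
      intro t ht
      have h1 : iteratedDeriv d z t * Real.exp (-x t) = 1 := by
        have := hgconst t ht; rw [hg0] at this; exact this
      have h2 : Real.exp (-x t) = (Real.exp (x t))⁻¹ := by
        rw [Real.exp_neg]
      rw [h2] at h1
      field_simp at h1
      linarith [h1]
    refine ⟨fun t ht => by rw [iterx d]; exact hkey t ht, ?_⟩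
    intro i hi
    match i with
    | 0 => simpa [iteratedDeriv_zero] using hx0
    | (j + 1) => rw [iterx j]; exact hinit j (by omega)
  · rintro ⟨hode, hinit⟩
    have h0mem : (0:ℝ) ∈ Ico (0:ℝ) τ := ⟨le_refl 0, hτ⟩
    have hkey : ∀ t ∈ Ico (0:ℝ) τ, iteratedDeriv d z t = Real.exp (x t) := by
      intro t ht
      rw [← iterx d]; exact hode t ht
    have hzd0 : iteratedDeriv d z 0 = 1 := by
      rw [hkey 0 h0mem, hx0, Real.exp_zero]
    refine ⟨?_, fun i hi => by
        rw [← iterx i]; exact hinit (i + 1) (by omega), hzd0⟩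
    -- ODE for z on Ico: first on Ioo, then by continuity on closure
    have hIoo : EqOn (iteratedDeriv (d + 1) z) (fun t => z t * Real.exp (x t)) (Ioo 0 τ) := by
      intro t ht
      have hnhds : Ico (0:ℝ) τ ∈ nhds t := by
        apply mem_of_superset (Ioo_mem_nhds ht.1 ht.2) Ioo_subset_Ico_self
      have heq : iteratedDeriv d z =ᶠ[nhds t] fun s => Real.exp (x s) :=
        eventually_of_mem hnhds (fun s hs => hkey s hs)
      have : deriv (iteratedDeriv d z) t = deriv (fun s => Real.exp (x s)) t :=
        heq.deriv_eq
      rw [iteratedDeriv_succ, this, (hexpx t).deriv]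
      simp [mul_comm]
    have hclosure : EqOn (iteratedDeriv (d + 1) z) (fun t => z t * Real.exp (x t))
        (closure (Ioo 0 τ)) :=
      hIoo.closure (hz.continuous_iteratedDeriv (d + 1) le_rfl)
        (hzc.mul (Real.continuous_exp.comp hxdiff.continuous))
    rw [closure_Ioo (ne_of_lt hτ)] at hclosure
    intro t ht
    have := hclosure (Ico_subset_Icc_self ht)
    rw [this, hkey t ht]
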